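/- Let a, b ∈ ℤ³ be primitive and ℚ-linearly independent. Then for every x ∈ U⁺_a ∩ U⁺_b and every w ∈ ℂ with w ≠ δ(x) for all δ ∈ ℤ³, one has the inversion relation Γ_{a,b}(w,x)·Γ_{b,a}(w,x) = 1. -/

import Mathlib

namespace EGG

/-- Integer vectors in `ℤ³`. -/
abbrev V : Type := Fin 3 → ℤ

/-- gcd of the three coordinates. -/
def gcd3 (v : V) : ℕ := Nat.gcd (Nat.gcd (v 0).natAbs (v 1).natAbs) (v 2).natAbs

/-- A vector of `ℤ³` is primitive if it is nonzero and the gcd of its coordinates is 1. -/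
def Primitive (a : V) : Prop := a ≠ 0 ∧ gcd3 a = 1

/-- Cross product of integer vectors. -/
def cross (a b : V) : V :=
  ![a 1 * b 2 - a 2 * b 1, a 2 * b 0 - a 0 * b 2, a 0 * b 1 - a 1 * b 0]

/-- Dot product of integer vectors. -/
def dotZ (α a : V) : ℤ := α 0 * a 0 + α 1 * a 1 + α 2 * a 2

/-- Dot product of a rational vector with an integer vector. -/
def dotQ (α : Fin 3 → ℚ) (a : V) : ℚ := α 0 * (a 0 : ℚ) + α 1 * (a 1 : ℚ) + α 2 * (a 2 : ℚ)

/-- Dot product of a real vector with an integer vector. -/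
def dotR (l : Fin 3 → ℝ) (a : V) : ℝ := l 0 * (a 0 : ℝ) + l 1 * (a 1 : ℝ) + l 2 * (a 2 : ℝ)

/-- The pairing `α(x) = α₁x₁+α₂x₂+α₃x₃` of a rational vector with a complex vector. -/
noncomputable def pairQ (α : Fin 3 → ℚ) (x : Fin 3 → ℂ) : ℂ :=
  (α 0 : ℂ) * x 0 + (α 1 : ℂ) * x 1 + (α 2 : ℂ) * x 2

/-- The pairing `α(x) = α₁x₁+α₂x₂+α₃x₃` of an integer vector with a complex vector. -/
noncomputable def pairZ (α : V) (x : Fin 3 → ℂ) : ℂ :=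
  (α 0 : ℂ) * x 0 + (α 1 : ℂ) * x 1 + (α 2 : ℂ) * x 2

/-- The canonical map `ℤ³ → ℚ³`. -/
def toQ (a : V) : Fin 3 → ℚ := fun i => (a i : ℚ)

/-- Determinant of the 3×3 matrix with rows `α, β, δ`. -/
def det3Q (α β δ : Fin 3 → ℚ) : ℚ := Matrix.det (Matrix.of ![α, β, δ])

/-- `(α, β)` is an oriented basis of the plane `H(a) = {α : α·a = 0}`. -/
def IsOrientedBasis (a : V) (α β : Fin 3 → ℚ) : Prop :=
  dotQ α a = 0 ∧ dotQ β a = 0 ∧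
  LinearIndependent ℚ ![α, β] ∧
  (∀ δ : Fin 3 → ℚ, dotQ δ a = 0 → ∃ p q : ℚ, δ = p • α + q • β) ∧
  (∀ δ : Fin 3 → ℚ, 0 < dotQ δ a → 0 < det3Q α β δ)

/-- The domain `U⁺_a ⊆ ℂ³`. -/
noncomputable def UPlus (a : V) : Set (Fin 3 → ℂ) :=
  {x | ∃ α β : Fin 3 → ℚ, IsOrientedBasis a α β ∧
    0 < (pairQ α x * (starRingEnd ℂ) (pairQ β x)).im}

/-- `γ` is the direction vector of the wedge `(a,b)`: `γ` is primitive and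
`a × b = s • γ` for some integer `s ≥ 1` (the modulus). -/
def IsDirVec (a b γ : V) : Prop :=
  Primitive γ ∧ ∃ s : ℤ, 1 ≤ s ∧ cross a b = s • γ

/-- `C₊₋(a,b) = {δ ∈ ℤ³ : δ·a > 0, δ·b ≤ 0}`. -/
def Cpm (a b : V) : Set V := {δ | 0 < dotZ δ a ∧ dotZ δ b ≤ 0}

/-- `C₋₊(a,b) = {δ ∈ ℤ³ : δ·a ≤ 0, δ·b > 0}`. -/
def Cmp (a b : V) : Set V := {δ | dotZ δ a ≤ 0 ∧ 0 < dotZ δ b}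

/-- The factor `1 - e^{-2πi(δ(x)-w)/γ(x)}` appearing in the numerator of `Γ_{a,b}`. -/
noncomputable def gammaFacP (γ : V) (x : Fin 3 → ℂ) (w : ℂ) (δ : V) : ℂ :=
  1 - Complex.exp (-(2 * (Real.pi : ℂ) * Complex.I) * (pairZ δ x - w) / pairZ γ x)

/-- The factor `1 - e^{2πi(δ(x)-w)/γ(x)}` appearing in the denominator of `Γ_{a,b}`. -/
noncomputable def gammaFacM (γ : V) (x : Fin 3 → ℂ) (w : ℂ) (δ : V) : ℂ :=
  1 - Complex.exp ((2 * (Real.pi : ℂ) * Complex.I) * (pairZ δ x - w) / pairZ γ x)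

/-- The gamma function `Γ_{a,b}(w,x)` of the wedge `(a,b)` with direction vector `γ`:
the products run over the sets `C₊₋(a,b)/ℤγ` and `C₋₊(a,b)/ℤγ`; each factor is evaluated
on the chosen representative `Quotient.out q` of the class `q` (the factors are constant
on classes modulo `ℤγ`). -/
noncomputable def GammaWedge (a b γ : V) (w : ℂ) (x : Fin 3 → ℂ) : ℂ :=
  if a = b then 1 else
    (∏' q : (QuotientAddGroup.mk '' Cpm a b : Set (V ⧸ AddSubgroup.zmultiples γ)),
      gammaFacP γ x w (Quotient.out (q : V ⧸ AddSubgroup.zmultiples γ))) /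
    (∏' q : (QuotientAddGroup.mk '' Cmp a b : Set (V ⧸ AddSubgroup.zmultiples γ)),
      gammaFacM γ x w (Quotient.out (q : V ⧸ AddSubgroup.zmultiples γ)))

/-- The theta function `θ₀(z,τ)`, for `Im τ > 0`. -/
noncomputable def theta0 (z τ : ℂ) : ℂ :=
  ∏' j : ℕ, ((1 - Complex.exp (2 * (Real.pi : ℂ) * Complex.I * (((j : ℂ) + 1) * τ - z))) *
    (1 - Complex.exp (2 * (Real.pi : ℂ) * Complex.I * ((j : ℂ) * τ + z))))

/-- The elliptic gamma function `Γ(z,τ,σ)`, for `Im τ > 0` and `Im σ > 0`. -/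
noncomputable def ellGamma (z τ σ : ℂ) : ℂ :=
  (∏' p : ℕ × ℕ, (1 - Complex.exp (2 * (Real.pi : ℂ) * Complex.I *
      (((p.1 : ℂ) + 1) * τ + ((p.2 : ℂ) + 1) * σ - z)))) /
  (∏' p : ℕ × ℕ, (1 - Complex.exp (2 * (Real.pi : ℂ) * Complex.I *
      ((p.1 : ℂ) * τ + (p.2 : ℂ) * σ + z))))

/-- The elliptic gamma function `Γ̃(z,τ,σ)` in the domain `Im τ < 0 < Im σ`. -/
noncomputable def ellGammaTilde (z τ σ : ℂ) : ℂ :=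
  (∏' p : ℕ × ℕ, (1 - Complex.exp (2 * (Real.pi : ℂ) * Complex.I *
      (z - ((p.1 : ℂ) + 1) * τ + (p.2 : ℂ) * σ)))) /
  (∏' p : ℕ × ℕ, (1 - Complex.exp (2 * (Real.pi : ℂ) * Complex.I *
      (-z - (p.1 : ℂ) * τ + ((p.2 : ℂ) + 1) * σ))))

/-- The polynomial `P₂`. -/
noncomputable def P2 (w x₁ x₂ : ℂ) : ℂ :=
  (w ^ 2 - (x₁ + x₂) * w + (x₁ ^ 2 + x₂ ^ 2 + 3 * x₁ * x₂) / 6) / (x₁ * x₂)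

/-- The Bernoulli polynomial `P₃ = B₃,₃`. -/
noncomputable def P3 (w x₁ x₂ x₃ : ℂ) : ℂ :=
  w ^ 3 / (x₁ * x₂ * x₃) - (3 * (x₁ + x₂ + x₃) / (2 * (x₁ * x₂ * x₃))) * w ^ 2
    + ((x₁ ^ 2 + x₂ ^ 2 + x₃ ^ 2 + 3 * x₁ * x₂ + 3 * x₂ * x₃ + 3 * x₁ * x₃)
        / (2 * (x₁ * x₂ * x₃))) * w
    - (1 / 4) * (x₁ + x₂ + x₃) * (1 / x₁ + 1 / x₂ + 1 / x₃)

/-- The real polynomial `R₃ = B₂,₃`. -/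
noncomputable def R3 (ζ t s : ℝ) : ℝ :=
  ζ ^ 3 / (t * s) - (3 / 2) * (1 / t + 1 / s) * ζ ^ 2
    + (t / (2 * s) + s / (2 * t) + 3 / 2) * ζ - (t + s) / 4

/-- The hermitian weight `h₂(z,τ)` for the theta bundle. -/
noncomputable def h2 (z τ : ℂ) : ℝ :=
  Real.exp (-2 * Real.pi * z.im ^ 2 / τ.im + 2 * Real.pi * (z - τ / 6).im)

/-- The hermitian weight `h₃(z,τ,σ)`. -/
noncomputable def h3 (z τ σ : ℂ) : ℝ :=
  Real.exp (-(2 * Real.pi / 3) * R3 z.im τ.im σ.im)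

/-- The finite product of theta functions `Δ` with parameters `A₁ = α₁(x)`, `A₂ = α₂(x)`,
`A₃ = α₃(x)` and first framing coordinate `m = μ(a)`:
`∏_{j=0}^{m-1} θ₀((w+jA₁)/A₃, A₂/A₃)` for `m ≥ 0` and
`(∏_{j=m}^{-1} θ₀((w+jA₁)/A₃, A₂/A₃))⁻¹` for `m < 0`. -/
noncomputable def DeltaInt (w A₁ A₂ A₃ : ℂ) (m : ℤ) : ℂ :=
  if 0 ≤ m then
    ∏ j ∈ Finset.range m.toNat, theta0 ((w + (j : ℂ) * A₁) / A₃) (A₂ / A₃)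
  else
    (∏ j ∈ Finset.range (-m).toNat, theta0 ((w - ((j : ℂ) + 1) * A₁) / A₃) (A₂ / A₃))⁻¹


section Lemmas

/-- swap a linearly independent pair -/
lemma li_swap {M : Type*} [AddCommGroup M] [Module ℚ M] {u v : M}
    (h : LinearIndependent ℚ ![u, v]) : LinearIndependent ℚ ![v, u] := by
  rw [Fintype.linearIndependent_iff] at h ⊢
  intro g hg i
  have := h ![g 1, g 0] (by
    simpa [Fin.sum_univ_two, add_comm] using hg)
  fin_cases i
  · simpa using this 1
  · simpa using this 0

lemma toQ_ne_zero {a : V} (h : toQ a ≠ 0) : a ≠ 0 := by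
  rintro rfl
  exact h (by funext i; simp [toQ])

lemma li_ne {a b : V} (hab : LinearIndependent ℚ ![toQ a, toQ b]) : a ≠ b := by
  intro h
  rw [Fintype.linearIndependent_iff] at hab
  have := hab ![1, -1] (by simp [Fin.sum_univ_two, h]) 0
  simp at this

lemma li_a_ne_zero {a b : V} (hab : LinearIndependent ℚ ![toQ a, toQ b]) : a ≠ 0 := by
  apply toQ_ne_zero
  simpa using hab.ne_zero 0

lemma li_b_ne_zero {a b : V} (hab : LinearIndependent ℚ ![toQ a, toQ b]) : b ≠ 0 := by
  apply toQ_ne_zero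
  simpa using hab.ne_zero 1

lemma gcd3_smul (s : ℤ) (v : V) : gcd3 (s • v) = s.natAbs * gcd3 v := by
  simp only [gcd3, Pi.smul_apply, smul_eq_mul, Int.natAbs_mul, Nat.gcd_mul_left]

lemma gcd3_neg (v : V) : gcd3 (-v) = gcd3 v := by
  simp only [gcd3, Pi.neg_apply, Int.natAbs_neg]

lemma cross_swap (a b : V) : cross b a = -cross a b := by
  funext i
  fin_cases i <;> simp [cross] <;> ring

/-- uniqueness of the primitive direction: if `s•u = t•v` with `u,v` primitive and
`1 ≤ s`, `1 ≤ t`, then `u = v`. -/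
lemma prim_smul_eq {s t : ℤ} {u v : V} (hu : Primitive u) (hv : Primitive v)
    (hs : 1 ≤ s) (ht : 1 ≤ t) (h : s • u = t • v) : u = v := by
  have hg : s.natAbs * gcd3 u = t.natAbs * gcd3 v := by
    rw [← gcd3_smul, ← gcd3_smul, h]
  rw [hu.2, hv.2, mul_one, mul_one] at hg
  have hst : s = t := by
    have h1 : s = (s.natAbs : ℤ) := (Int.natAbs_of_nonneg (by omega)).symm
    have h2 : t = (t.natAbs : ℤ) := (Int.natAbs_of_nonneg (by omega)).symm
    rw [h1, h2, hg]
  subst hst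
  funext i
  have := congrFun h i
  simp only [Pi.smul_apply, smul_eq_mul] at this
  exact mul_left_cancel₀ (by omega) this

end Lemmas
section Lemmas2

lemma dotZ_cross_left (a b : V) : dotZ (cross a b) a = 0 := by
  simp [dotZ, cross]; ring

lemma dotZ_cross_right (a b : V) : dotZ (cross a b) b = 0 := by
  simp [dotZ, cross]; ring

lemma dotZ_smul (s : ℤ) (u a : V) : dotZ (s • u) a = s * dotZ u a := by
  simp [dotZ]; ring

/-- triple product identity: `det(u, a×b, ξ)`-like relation used for orientation signs,
here phrased as a cross-product relation. -/
lemma cross_with_cross (a b v : V) (hva : dotZ v a = 0) (hvb : dotZ v b = 0) :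
    cross v (cross a b) = 0 := by
  have h1 : v 0 * a 0 + v 1 * a 1 + v 2 * a 2 = 0 := hva
  have h2 : v 0 * b 0 + v 1 * b 1 + v 2 * b 2 = 0 := hvb
  funext i
  fin_cases i <;> simp [cross]
  · linear_combination a 0 * h2 - b 0 * h1
  · linear_combination a 1 * h2 - b 1 * h1
  · linear_combination a 2 * h2 - b 2 * h1

/-- a vector orthogonal to both `a` and `b` is an integer multiple of the
primitive direction vector `γ`. -/
lemma ker_eq_zmul {a b γ : V} (hγ : IsDirVec a b γ) {v : V}
    (hva : dotZ v a = 0) (hvb : dotZ v b = 0) : ∃ n : ℤ, v = n • γ := by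
  obtain ⟨⟨hγ0, hγ1⟩, s, hs, hcr⟩ := hγ
  have hvγ : cross v γ = 0 := by
    have h := cross_with_cross a b v hva hvb
    rw [hcr] at h
    funext i
    have hi := congrFun h i
    have : cross v (s • γ) i = s * cross v γ i := by
      fin_cases i <;> simp [cross] <;> ring
    rw [this] at hi
    have hs0 : s ≠ 0 := by omega
    simpa [Pi.zero_apply] using (mul_eq_zero.mp hi).resolve_left hs0
  -- coordinates of cross v γ = 0 give proportionality relations
  have hrel : ∀ i j : Fin 3, v i * γ j = v j * γ i := by
    have e0 := congrFun hvγ 0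
    have e1 := congrFun hvγ 1
    have e2 := congrFun hvγ 2
    simp only [cross, Matrix.cons_val_zero, Matrix.cons_val_one, Matrix.head_cons,
      Matrix.cons_val_two, Matrix.tail_cons, Pi.zero_apply, sub_eq_zero] at e0 e1 e2
    intro i j
    fin_cases i <;> fin_cases j <;> simp_all <;> linarith
  -- some coordinate of γ is nonzero
  have hne : γ 0 ≠ 0 ∨ γ 1 ≠ 0 ∨ γ 2 ≠ 0 := by
    by_contra h
    push_neg at h
    exact hγ0 (by funext i; fin_cases i <;> simp [h.1, h.2.1, h.2.2])
  obtain ⟨k, hk⟩ : ∃ k : Fin 3, γ k ≠ 0 := by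
    rcases hne with h | h | h
    exacts [⟨0, h⟩, ⟨1, h⟩, ⟨2, h⟩]
  -- Bezout: 1 = combination of γ i's
  have hbez : ∃ c0 c1 c2 : ℤ, γ 0 * c0 + γ 1 * c1 + γ 2 * c2 = 1 := by
    have h01 : (Int.gcd (γ 0) (γ 1) : ℤ) = γ 0 * Int.gcdA (γ 0) (γ 1) + γ 1 * Int.gcdB (γ 0) (γ 1) :=
      Int.gcd_eq_gcd_ab _ _
    have h012 : (Int.gcd ((Int.gcd (γ 0) (γ 1) : ℤ)) (γ 2) : ℤ)
        = (Int.gcd (γ 0) (γ 1) : ℤ) * Int.gcdA ((Int.gcd (γ 0) (γ 1) : ℤ)) (γ 2)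
          + γ 2 * Int.gcdB ((Int.gcd (γ 0) (γ 1) : ℤ)) (γ 2) := Int.gcd_eq_gcd_ab _ _
    have hgone : (Int.gcd ((Int.gcd (γ 0) (γ 1) : ℤ)) (γ 2) : ℤ) = 1 := by
      have : gcd3 γ = 1 := hγ1
      simp only [gcd3] at this
      rw [show Int.gcd ((Int.gcd (γ 0) (γ 1) : ℤ)) (γ 2)
        = Nat.gcd (Nat.gcd (γ 0).natAbs (γ 1).natAbs) (γ 2).natAbs by
          simp [Int.gcd, Int.natAbs_natCast]]
      exact_mod_cast this
    refine ⟨Int.gcdA (γ 0) (γ 1) * Int.gcdA ((Int.gcd (γ 0) (γ 1) : ℤ)) (γ 2),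
      Int.gcdB (γ 0) (γ 1) * Int.gcdA ((Int.gcd (γ 0) (γ 1) : ℤ)) (γ 2),
      Int.gcdB ((Int.gcd (γ 0) (γ 1) : ℤ)) (γ 2), ?_⟩
    rw [← hgone, h012, h01]; ring
  obtain ⟨c0, c1, c2, hc⟩ := hbez
  -- γ k divides v k
  have hvk : v k = γ k * (v 0 * c0 + v 1 * c1 + v 2 * c2) := by
    have e0 : v k * γ 0 = v 0 * γ k := hrel k 0
    have e1 : v k * γ 1 = v 1 * γ k := hrel k 1
    have e2 : v k * γ 2 = v 2 * γ k := hrel k 2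
    calc v k = v k * (γ 0 * c0 + γ 1 * c1 + γ 2 * c2) := by rw [hc, mul_one]
    _ = (v k * γ 0) * c0 + (v k * γ 1) * c1 + (v k * γ 2) * c2 := by ring
    _ = γ k * (v 0 * c0 + v 1 * c1 + v 2 * c2) := by rw [e0, e1, e2]; ring
  refine ⟨v 0 * c0 + v 1 * c1 + v 2 * c2, ?_⟩
  funext i
  have h1 : v k * γ i = v i * γ k := hrel k i
  rw [hvk] at h1
  have h2 : γ k * v i = γ k * ((v 0 * c0 + v 1 * c1 + v 2 * c2) * γ i) := by linarith [h1]
  have := mul_left_cancel₀ hk h2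
  simp only [Pi.smul_apply, smul_eq_mul]
  rw [this]

end Lemmas2
section Lemmas3

lemma pairZ_eq_pairQ (c : V) (x : Fin 3 → ℂ) : pairZ c x = pairQ (toQ c) x := by
  simp [pairZ, pairQ, toQ]

/-- decomposition of `pairZ c x` in an oriented basis -/
lemma pairZ_decomp {c : V} {α β : Fin 3 → ℚ} {p q : ℚ} (h : toQ c = p • α + q • β)
    (x : Fin 3 → ℂ) : pairZ c x = (p : ℂ) * pairQ α x + (q : ℂ) * pairQ β x := by
  rw [pairZ_eq_pairQ, h]
  simp only [pairQ, Pi.add_apply, Pi.smul_apply, smul_eq_mul]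
  push_cast
  ring

lemma dotQ_toQ (c a : V) : dotQ (toQ c) a = (dotZ c a : ℚ) := by
  simp [dotQ, dotZ, toQ]

/-- `γ(x) ≠ 0` when `γ ⊥ e` and `x ∈ U⁺ₑ`, `γ` primitive. -/
lemma pairZ_ne_zero_of_UPlus {e γ : V} (hγ0 : γ ≠ 0) (hγe : dotZ γ e = 0)
    {x : Fin 3 → ℂ} (hx : x ∈ UPlus e) : pairZ γ x ≠ 0 := by
  obtain ⟨α, β, hOB, hM⟩ := hx
  obtain ⟨p, q, hpq⟩ := hOB.2.2.2.1 (toQ γ) (by rw [dotQ_toQ, hγe, Int.cast_zero])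
  set A := pairQ α x with hA
  set B := pairQ β x with hB
  intro h0
  rw [pairZ_decomp hpq] at h0
  -- extract real equations
  have hre : (p : ℝ) * A.re + (q : ℝ) * B.re = 0 := by
    have := congrArg Complex.re h0
    simpa [Complex.add_re, Complex.mul_re] using this
  have him : (p : ℝ) * A.im + (q : ℝ) * B.im = 0 := by
    have := congrArg Complex.im h0
    simpa [Complex.add_im, Complex.mul_im] using this
  have hMval : (A * (starRingEnd ℂ) B).im = A.im * B.re - A.re * B.im := by
    simp only [Complex.mul_im, Complex.conj_re, Complex.conj_im]
    ring
  rw [hMval] at hM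
  have hpM : (p : ℝ) * (A.im * B.re - A.re * B.im) = 0 := by
    linear_combination B.re * him - B.im * hre
  have hqM : (q : ℝ) * (A.im * B.re - A.re * B.im) = 0 := by
    linear_combination A.im * hre - A.re * him
  have hp0 : (p : ℝ) = 0 ∧ (q : ℝ) = 0 := by
    constructor
    · rcases mul_eq_zero.mp hpM with h | h
      · exact h
      · exact absurd h hM.ne'
    · rcases mul_eq_zero.mp hqM with h | h
      · exact h
      · exact absurd h hM.ne'
  have : toQ γ = 0 := by
    rw [hpq]
    have hp : p = 0 := by exact_mod_cast hp0.1
    have hq : q = 0 := by exact_mod_cast hp0.2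
    simp [hp, hq]
  exact hγ0 (by
    funext i
    have := congrFun this i
    simpa [toQ] using this)

/-- the factors are nonzero when `w` avoids the lattice `{δ(x)}`. -/
lemma gammaFacP_ne_zero {γ : V} {x : Fin 3 → ℂ} (hγx : pairZ γ x ≠ 0)
    {w : ℂ} (hw : ∀ δ : V, w ≠ pairZ δ x) (δ : V) : gammaFacP γ x w δ ≠ 0 := by
  unfold gammaFacP
  intro h
  have h1 : Complex.exp (-(2 * (Real.pi : ℂ) * Complex.I) * (pairZ δ x - w) / pairZ γ x) = 1 := by
    have := sub_eq_zero.mp h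
    exact this.symm
  rw [Complex.exp_eq_one_iff] at h1
  obtain ⟨n, hn⟩ := h1
  have h2πi : (2 * (Real.pi : ℂ) * Complex.I) ≠ 0 := by
    simp [Complex.I_ne_zero, Real.pi_ne_zero, Complex.ofReal_ne_zero]
  have h3 : -(2 * (Real.pi : ℂ) * Complex.I) * (pairZ δ x - w)
      = (n : ℂ) * (2 * (Real.pi : ℂ) * Complex.I) * pairZ γ x := (div_eq_iff hγx).mp hn
  have key : pairZ δ x - w = -(n : ℂ) * pairZ γ x := by
    apply mul_left_cancel₀ h2πi
    linear_combination -h3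
  apply hw (δ + n • γ)
  have hpair : pairZ (δ + n • γ) x = pairZ δ x + (n : ℂ) * pairZ γ x := by
    simp only [pairZ, Pi.add_apply, Pi.smul_apply, smul_eq_mul]
    push_cast
    ring
  rw [hpair]
  linear_combination -key

lemma gammaFacM_ne_zero {γ : V} {x : Fin 3 → ℂ} (hγx : pairZ γ x ≠ 0)
    {w : ℂ} (hw : ∀ δ : V, w ≠ pairZ δ x) (δ : V) : gammaFacM γ x w δ ≠ 0 := by
  unfold gammaFacM
  intro h
  have h1 : Complex.exp ((2 * (Real.pi : ℂ) * Complex.I) * (pairZ δ x - w) / pairZ γ x) = 1 :=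
    (sub_eq_zero.mp h).symm
  rw [Complex.exp_eq_one_iff] at h1
  obtain ⟨n, hn⟩ := h1
  have h2πi : (2 * (Real.pi : ℂ) * Complex.I) ≠ 0 := by
    simp [Complex.I_ne_zero, Real.pi_ne_zero, Complex.ofReal_ne_zero]
  have h3 : (2 * (Real.pi : ℂ) * Complex.I) * (pairZ δ x - w)
      = (n : ℂ) * (2 * (Real.pi : ℂ) * Complex.I) * pairZ γ x := (div_eq_iff hγx).mp hn
  have key : pairZ δ x - w = (n : ℂ) * pairZ γ x := by
    apply mul_left_cancel₀ h2πi
    linear_combination h3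
  apply hw (δ + (-n) • γ)
  have hpair : pairZ (δ + (-n) • γ) x = pairZ δ x - (n : ℂ) * pairZ γ x := by
    simp only [pairZ, Pi.add_apply, Pi.smul_apply, smul_eq_mul]
    push_cast
    ring
  rw [hpair]
  linear_combination -key

end Lemmas3
section Lemmas4

/-- integer determinant of three rows -/
def det3Z (u v w : V) : ℤ :=
  u 0 * (v 1 * w 2 - v 2 * w 1) - u 1 * (v 0 * w 2 - v 2 * w 0) + u 2 * (v 0 * w 1 - v 1 * w 0)

lemma det3Q_expand (u v w : Fin 3 → ℚ) :
    det3Q u v w = u 0 * (v 1 * w 2 - v 2 * w 1) - u 1 * (v 0 * w 2 - v 2 * w 0)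
      + u 2 * (v 0 * w 1 - v 1 * w 0) := by
  simp [det3Q, Matrix.det_fin_three]
  ring

lemma det3Q_toQ (u v w : V) : det3Q (toQ u) (toQ v) (toQ w) = (det3Z u v w : ℚ) := by
  rw [det3Q_expand]
  simp [det3Z, toQ]

lemma det3Q_bilin (p q r t : ℚ) (α β ξ : Fin 3 → ℚ) :
    det3Q (p • α + q • β) (r • α + t • β) ξ = (p * t - q * r) * det3Q α β ξ := by
  rw [det3Q_expand, det3Q_expand]
  simp only [Pi.add_apply, Pi.smul_apply, smul_eq_mul]
  ring

/-- triple product expansion: `det(u, a×b, ξ) = (u·b)(ξ·a) - (u·a)(ξ·b)` -/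
lemma det3Z_cross (u a b ξ : V) :
    det3Z u (cross a b) ξ = dotZ u b * dotZ ξ a - dotZ u a * dotZ ξ b := by
  simp [det3Z, cross, dotZ]
  ring

lemma det3Z_smul_middle (s : ℤ) (u v w : V) : det3Z u (s • v) w = s * det3Z u v w := by
  simp [det3Z]
  ring

/-- Key sign lemma: for `c ⊥ e`, `γ ⊥ e`, `x ∈ U⁺ₑ`, the imaginary part of `c(x)/γ(x)`
is a positive multiple of the determinant `det(c, γ, ξ)` for any `ξ` with `ξ·e > 0`. -/
lemma im_ratio {e c γ : V} {ξ : Fin 3 → ℚ} {x : Fin 3 → ℂ} (hx : x ∈ UPlus e)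
    (hγx : pairZ γ x ≠ 0) (hce : dotZ c e = 0) (hγe : dotZ γ e = 0)
    (hξ : 0 < dotQ ξ e) :
    ∃ K : ℝ, 0 < K ∧ (pairZ c x / pairZ γ x).im = K * ((det3Q (toQ c) (toQ γ) ξ : ℚ) : ℝ) := by
  obtain ⟨α, β, hOB, hM⟩ := hx
  obtain ⟨p, q, hpq⟩ := hOB.2.2.2.1 (toQ c) (by rw [dotQ_toQ, hce, Int.cast_zero])
  obtain ⟨r, t, hrt⟩ := hOB.2.2.2.1 (toQ γ) (by rw [dotQ_toQ, hγe, Int.cast_zero])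
  have hD : 0 < det3Q α β ξ := hOB.2.2.2.2 ξ hξ
  set A := pairQ α x
  set B := pairQ β x
  have hzc : pairZ c x = (p : ℂ) * A + (q : ℂ) * B := pairZ_decomp hpq x
  have hzγ : pairZ γ x = (r : ℂ) * A + (t : ℂ) * B := pairZ_decomp hrt x
  have hdet : det3Q (toQ c) (toQ γ) ξ = (p * t - q * r) * det3Q α β ξ := by
    rw [hpq, hrt, det3Q_bilin]
  set M : ℝ := A.im * B.re - A.re * B.im with hMdef
  have hM' : 0 < M := by
    have : (A * (starRingEnd ℂ) B).im = M := by
      simp only [Complex.mul_im, Complex.conj_re, Complex.conj_im, hMdef]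
      ring
    rwa [this] at hM
  have hnsq : 0 < Complex.normSq (pairZ γ x) := Complex.normSq_pos.mpr hγx
  refine ⟨M / (((det3Q α β ξ : ℚ) : ℝ) * Complex.normSq (pairZ γ x)), ?_, ?_⟩
  · apply div_pos hM'
    apply mul_pos _ hnsq
    exact_mod_cast hD
  · rw [Complex.div_im]
    have hre : (pairZ c x).im * (pairZ γ x).re - (pairZ c x).re * (pairZ γ x).im
        = ((p : ℝ) * (t : ℝ) - (q : ℝ) * (r : ℝ)) * M := by
      rw [hzc, hzγ]
      simp only [Complex.add_re, Complex.add_im, Complex.mul_re, Complex.mul_im,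
        Complex.ratCast_re, Complex.ratCast_im, hMdef]
      ring
    have hDne : ((det3Q α β ξ : ℚ) : ℝ) ≠ 0 := by
      have : (0:ℝ) < ((det3Q α β ξ : ℚ) : ℝ) := by exact_mod_cast hD
      exact this.ne'
    rw [div_sub_div_same, hre, hdet]
    push_cast
    field_simp
end Lemmas4
section Lemmas5

lemma dotZ_comm (u v : V) : dotZ u v = dotZ v u := by simp [dotZ]; ring

lemma pairZ_smul (k : ℤ) (v : V) (x : Fin 3 → ℂ) :
    pairZ (k • v) x = (k : ℂ) * pairZ v x := by
  simp only [pairZ, Pi.smul_apply, smul_eq_mul]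
  push_cast
  ring

lemma dotZ_sub (u v a : V) : dotZ (u - v) a = dotZ u a - dotZ v a := by
  simp [dotZ]; ring

lemma dotZ_self_pos {v : V} (hv : v ≠ 0) : 0 < dotZ v v := by
  have hne : v 0 ≠ 0 ∨ v 1 ≠ 0 ∨ v 2 ≠ 0 := by
    by_contra h
    push_neg at h
    exact hv (by funext i; fin_cases i <;> simp [h.1, h.2.1, h.2.2])
  unfold dotZ
  rcases hne with h | h | h <;>
    nlinarith [mul_self_nonneg (v 0), mul_self_nonneg (v 1), mul_self_nonneg (v 2),
      mul_self_pos.mpr h]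

lemma lagrange (a b : V) :
    dotZ (cross a b) (cross a b) = dotZ a a * dotZ b b - dotZ a b ^ 2 := by
  simp [dotZ, cross]; ring

/-- the linear expansion of `ψ(δ) = Im(δ(x)/γ(x))` in terms of `δ·a` and `δ·b`. -/
lemma psi_linear {a b γ : V} (hγ : IsDirVec a b γ) {x : Fin 3 → ℂ}
    (hγa : dotZ γ a = 0) (hγb : dotZ γ b = 0) (hγx : pairZ γ x ≠ 0) (δ : V) :
    ((dotZ a a * dotZ b b - dotZ a b ^ 2 : ℤ) : ℝ) * (pairZ δ x / pairZ γ x).im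
      = ((dotZ δ a : ℤ) : ℝ) * (pairZ (dotZ b b • a - dotZ a b • b) x / pairZ γ x).im
      + ((dotZ δ b : ℤ) : ℝ) * (pairZ (dotZ a a • b - dotZ a b • a) x / pairZ γ x).im := by
  set U : V := dotZ b b • a - dotZ a b • b with hUdef
  set W : V := dotZ a a • b - dotZ a b • a with hWdef
  set Δ : ℤ := dotZ a a * dotZ b b - dotZ a b ^ 2 with hΔdef
  set r : V := Δ • δ - dotZ δ a • U - dotZ δ b • W with hrdef
  have hra : dotZ r a = 0 := by
    simp only [hrdef, hUdef, hWdef, hΔdef, dotZ, Pi.sub_apply, Pi.smul_apply, smul_eq_mul]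
    ring
  have hrb : dotZ r b = 0 := by
    simp only [hrdef, hUdef, hWdef, hΔdef, dotZ, Pi.sub_apply, Pi.smul_apply, smul_eq_mul]
    ring
  obtain ⟨k, hk⟩ := ker_eq_zmul hγ hra hrb
  have hψr : (pairZ r x / pairZ γ x).im = 0 := by
    rw [hk, pairZ_smul, mul_div_assoc, div_self hγx, mul_one]
    simp
  have hpr : pairZ r x = (Δ : ℂ) * pairZ δ x - (dotZ δ a : ℂ) * pairZ U x
      - (dotZ δ b : ℂ) * pairZ W x := by
    simp only [pairZ, hrdef, Pi.sub_apply, Pi.smul_apply, smul_eq_mul]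
    push_cast
    ring
  have hdiv : pairZ r x / pairZ γ x = (Δ : ℂ) * (pairZ δ x / pairZ γ x)
      - (dotZ δ a : ℂ) * (pairZ U x / pairZ γ x)
      - (dotZ δ b : ℂ) * (pairZ W x / pairZ γ x) := by
    rw [hpr]
    ring
  have him := congrArg Complex.im hdiv
  rw [hψr] at him
  simp only [Complex.sub_im, Complex.mul_im, Complex.intCast_re, Complex.intCast_im,
    zero_mul, add_zero, mul_zero] at him
  push_cast
  linarith [him]

end Lemmas5
section Lemmas6

open Filter

lemma aux_summable (C R : ℝ) (hC : 0 ≤ C) (hR0 : 0 ≤ R) (hR1 : R < 1) :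
    Summable (fun p : ℕ × ℕ => (C * R ^ p.1) * R ^ p.2) := by
  apply Summable.mul_of_nonneg ((summable_geometric_of_lt_one hR0 hR1).mul_left C)
    (summable_geometric_of_lt_one hR0 hR1)
  · intro i
    dsimp only
    positivity
  · intro j
    dsimp only
    positivity

/-- The numerator product of `Γ_{a,b}` is nonzero. -/
lemma tprod_ne_zero (a b γ : V) (hab : LinearIndependent ℚ ![toQ a, toQ b])
    (hγ : IsDirVec a b γ) (x : Fin 3 → ℂ) (hx : x ∈ UPlus a ∩ UPlus b)
    (w : ℂ) (hw : ∀ δ : V, w ≠ pairZ δ x) :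
    (∏' q : (QuotientAddGroup.mk '' Cpm a b : Set (V ⧸ AddSubgroup.zmultiples γ)),
      gammaFacP γ x w (Quotient.out (q : V ⧸ AddSubgroup.zmultiples γ))) ≠ 0 := by
  obtain ⟨hγprim, s, hs, hcr⟩ := hγ
  have ha0 : a ≠ 0 := li_a_ne_zero hab
  have hb0 : b ≠ 0 := li_b_ne_zero hab
  have hγa : dotZ γ a = 0 := by
    have h := dotZ_cross_left a b
    rw [hcr, dotZ_smul] at h
    exact (mul_eq_zero.mp h).resolve_left (by omega)
  have hγb : dotZ γ b = 0 := by
    have h := dotZ_cross_right a b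
    rw [hcr, dotZ_smul] at h
    exact (mul_eq_zero.mp h).resolve_left (by omega)
  have hγx : pairZ γ x ≠ 0 := pairZ_ne_zero_of_UPlus hγprim.1 hγa hx.1
  set S := (QuotientAddGroup.mk '' Cpm a b : Set (V ⧸ AddSubgroup.zmultiples γ)) with hSdef
  -- representative data
  set m : S → ℤ := fun q => dotZ (Quotient.out (q : V ⧸ AddSubgroup.zmultiples γ)) a with hmdef
  set n : S → ℤ := fun q => dotZ (Quotient.out (q : V ⧸ AddSubgroup.zmultiples γ)) b with hndef
  have hrep : ∀ q : S, 1 ≤ m q ∧ n q ≤ 0 := by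
    rintro ⟨q, δ₀, hδ₀, hq⟩
    have hmk : QuotientAddGroup.mk (s := AddSubgroup.zmultiples γ) (Quotient.out q)
        = QuotientAddGroup.mk (s := AddSubgroup.zmultiples γ) δ₀ := by
      rw [QuotientAddGroup.out_eq' q, ← hq]
    obtain ⟨k, hk⟩ := AddSubgroup.mem_zmultiples_iff.mp (QuotientAddGroup.eq.mp hmk)
    have hout : Quotient.out q = δ₀ - k • γ := by
      have := hk
      funext i
      have h2 := congrFun hk i
      simp only [Pi.smul_apply, smul_eq_mul, Pi.neg_apply, Pi.add_apply] at h2 ⊢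
      simp only [Pi.sub_apply, Pi.smul_apply, smul_eq_mul]
      linarith [h2]
    constructor
    · show 1 ≤ dotZ (Quotient.out q) a
      rw [hout, dotZ_sub, dotZ_smul, hγa, mul_zero, sub_zero]
      exact hδ₀.1
    · show dotZ (Quotient.out q) b ≤ 0
      rw [hout, dotZ_sub, dotZ_smul, hγb, mul_zero, sub_zero]
      exact hδ₀.2
  -- injectivity of the invariants
  have hinj : Function.Injective (fun q : S => ((m q - 1).toNat, (-n q).toNat)) := by
    intro q q' h
    simp only [Prod.mk.injEq] at h
    have hm : m q = m q' := by
      have h1 := congrArg (fun t : ℕ => (t : ℤ)) h.1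
      simp only [Int.toNat_of_nonneg (by linarith [(hrep q).1] : (0:ℤ) ≤ m q - 1),
        Int.toNat_of_nonneg (by linarith [(hrep q').1] : (0:ℤ) ≤ m q' - 1)] at h1
      omega
    have hn : n q = n q' := by
      have h2 := congrArg (fun t : ℕ => (t : ℤ)) h.2
      simp only [Int.toNat_of_nonneg (by linarith [(hrep q).2] : (0:ℤ) ≤ -n q),
        Int.toNat_of_nonneg (by linarith [(hrep q').2] : (0:ℤ) ≤ -n q')] at h2
      omega
    simp only [hmdef] at hm
    simp only [hndef] at hn
    have hva : dotZ (Quotient.out (q : V ⧸ AddSubgroup.zmultiples γ)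
        - Quotient.out ((q' : S) : V ⧸ AddSubgroup.zmultiples γ)) a = 0 := by
      rw [dotZ_sub]; omega
    have hvb : dotZ (Quotient.out (q : V ⧸ AddSubgroup.zmultiples γ)
        - Quotient.out ((q' : S) : V ⧸ AddSubgroup.zmultiples γ)) b = 0 := by
      rw [dotZ_sub]; omega
    obtain ⟨kk, hkk⟩ := ker_eq_zmul ⟨hγprim, s, hs, hcr⟩ hva hvb
    apply Subtype.ext
    rw [← QuotientAddGroup.out_eq' (q : V ⧸ AddSubgroup.zmultiples γ),
      ← QuotientAddGroup.out_eq' ((q' : S) : V ⧸ AddSubgroup.zmultiples γ)]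
    rw [QuotientAddGroup.eq]
    rw [AddSubgroup.mem_zmultiples_iff]
    refine ⟨-kk, ?_⟩
    funext i
    have := congrFun hkk i
    simp only [Pi.sub_apply, Pi.smul_apply, smul_eq_mul] at this ⊢
    simp only [Pi.add_apply, Pi.neg_apply]
    linarith [this]
  -- the Gram determinant
  set Δ : ℤ := dotZ a a * dotZ b b - dotZ a b ^ 2 with hΔdef
  have hΔ : 0 < Δ := by
    have hlag := lagrange a b
    rw [hcr] at hlag
    have h1 : dotZ (s • γ) (s • γ) = s ^ 2 * dotZ γ γ := by simp [dotZ]; ring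
    have hγγ : 0 < dotZ γ γ := dotZ_self_pos hγprim.1
    rw [h1] at hlag
    nlinarith [hγγ, hs]
  set U : V := dotZ b b • a - dotZ a b • b with hUdef
  set W : V := dotZ a a • b - dotZ a b • a with hWdef
  set ψU : ℝ := (pairZ U x / pairZ γ x).im with hψUdef
  set ψW : ℝ := (pairZ W x / pairZ γ x).im with hψWdef
  have hUb : dotZ U b = 0 := by
    simp only [hUdef, dotZ, Pi.sub_apply, Pi.smul_apply, smul_eq_mul]; ring
  have hUa : dotZ U a = Δ := by
    simp only [hUdef, hΔdef, dotZ, Pi.sub_apply, Pi.smul_apply, smul_eq_mul]; ring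
  have hWa : dotZ W a = 0 := by
    simp only [hWdef, dotZ, Pi.sub_apply, Pi.smul_apply, smul_eq_mul]; ring
  have hWb : dotZ W b = Δ := by
    simp only [hWdef, hΔdef, dotZ, Pi.sub_apply, Pi.smul_apply, smul_eq_mul]; ring
  have hψU : ψU < 0 := by
    obtain ⟨K, hK, him⟩ := im_ratio (e := b) (c := U) (ξ := toQ b) hx.2 hγx hUb hγb
      (by rw [dotQ_toQ]; exact_mod_cast dotZ_self_pos hb0)
    have hdet1 : det3Z U (cross a b) b = -(Δ * dotZ b b) := by
      rw [det3Z_cross, hUb, hUa]; ring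
    rw [hcr, det3Z_smul_middle] at hdet1
    have hdneg : det3Z U γ b < 0 := by nlinarith [dotZ_self_pos hb0, hΔ, hs]
    rw [det3Q_toQ] at him
    have hcast : ((((det3Z U γ b : ℤ) : ℚ)) : ℝ) < 0 := by exact_mod_cast hdneg
    rw [hψUdef, him]
    exact mul_neg_of_pos_of_neg hK hcast
  have hψW : 0 < ψW := by
    obtain ⟨K, hK, him⟩ := im_ratio (e := a) (c := W) (ξ := toQ a) hx.1 hγx hWa hγa
      (by rw [dotQ_toQ]; exact_mod_cast dotZ_self_pos ha0)
    have hdet1 : det3Z W (cross a b) a = Δ * dotZ a a := by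
      rw [det3Z_cross, hWa, hWb, dotZ_comm a b]; ring
    rw [hcr, det3Z_smul_middle] at hdet1
    have hdpos : 0 < det3Z W γ a := by nlinarith [dotZ_self_pos ha0, hΔ, hs]
    rw [det3Q_toQ] at him
    have hcast : (0:ℝ) < (((det3Z W γ a : ℤ) : ℚ) : ℝ) := by exact_mod_cast hdpos
    rw [hψWdef, him]
    exact mul_pos hK hcast
  have hΔR : (0:ℝ) < ((Δ : ℤ) : ℝ) := by exact_mod_cast hΔ
  set ε : ℝ := min (-ψU) ψW / ((Δ : ℤ) : ℝ) with hεdef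
  have hε : 0 < ε := div_pos (lt_min (by linarith) (by linarith)) hΔR
  have hεΔ : ε * ((Δ : ℤ) : ℝ) = min (-ψU) ψW := by
    rw [hεdef, div_mul_cancel₀ _ hΔR.ne']
  have hεU : ψU ≤ -(ε * ((Δ : ℤ) : ℝ)) := by
    rw [hεΔ]
    have := min_le_left (-ψU) ψW
    linarith
  have hεW : ε * ((Δ : ℤ) : ℝ) ≤ ψW := by
    rw [hεΔ]
    exact min_le_right _ _
  -- the main pointwise bound
  have hbound : ∀ q : S,
      (pairZ (Quotient.out (q : V ⧸ AddSubgroup.zmultiples γ)) x / pairZ γ x).im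
        ≤ -ε * ((m q : ℝ) - (n q : ℝ)) := by
    intro q
    have hlin := psi_linear ⟨hγprim, s, hs, hcr⟩ hγa hγb hγx
      (Quotient.out (q : V ⧸ AddSubgroup.zmultiples γ))
    have h1z : (1:ℤ) ≤ dotZ (Quotient.out (q : V ⧸ AddSubgroup.zmultiples γ)) a := (hrep q).1
    have h2z : dotZ (Quotient.out (q : V ⧸ AddSubgroup.zmultiples γ)) b ≤ 0 := (hrep q).2
    have h1 : (1:ℝ) ≤ ((dotZ (Quotient.out (q : V ⧸ AddSubgroup.zmultiples γ)) a : ℤ) : ℝ) := by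
      exact_mod_cast h1z
    have h2 : ((dotZ (Quotient.out (q : V ⧸ AddSubgroup.zmultiples γ)) b : ℤ) : ℝ) ≤ 0 := by
      exact_mod_cast h2z
    show _ ≤ -ε * (((dotZ (Quotient.out (q : V ⧸ AddSubgroup.zmultiples γ)) a : ℤ) : ℝ)
      - ((dotZ (Quotient.out (q : V ⧸ AddSubgroup.zmultiples γ)) b : ℤ) : ℝ))
    have h3 : ((dotZ (Quotient.out (q : V ⧸ AddSubgroup.zmultiples γ)) a : ℤ) : ℝ) * ψU
        ≤ ((dotZ (Quotient.out (q : V ⧸ AddSubgroup.zmultiples γ)) a : ℤ) : ℝ)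
          * (-(ε * ((Δ : ℤ) : ℝ))) :=
      mul_le_mul_of_nonneg_left hεU (by linarith)
    have h4 : ((dotZ (Quotient.out (q : V ⧸ AddSubgroup.zmultiples γ)) b : ℤ) : ℝ) * ψW
        ≤ ((dotZ (Quotient.out (q : V ⧸ AddSubgroup.zmultiples γ)) b : ℤ) : ℝ)
          * (ε * ((Δ : ℤ) : ℝ)) := by
      nlinarith [hεW, h2]
    nlinarith [hlin, h3, h4, hΔR, hε, h1, h2]
  -- norms of the exponential terms
  set Wc : ℝ := (w / pairZ γ x).im with hWcdef
  set E : S → ℂ := fun q => Complex.exp (-(2 * (Real.pi : ℂ) * Complex.I)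
    * (pairZ (Quotient.out (q : V ⧸ AddSubgroup.zmultiples γ)) x - w) / pairZ γ x) with hEdef
  have hEnorm : ∀ q : S, ‖E q‖ = Real.exp (2 * Real.pi *
      ((pairZ (Quotient.out (q : V ⧸ AddSubgroup.zmultiples γ)) x / pairZ γ x).im - Wc)) := by
    intro q
    rw [hEdef]
    rw [show ‖Complex.exp (-(2 * (Real.pi : ℂ) * Complex.I)
      * (pairZ (Quotient.out (q : V ⧸ AddSubgroup.zmultiples γ)) x - w) / pairZ γ x)‖
      = Real.exp ((-(2 * (Real.pi : ℂ) * Complex.I)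
      * (pairZ (Quotient.out (q : V ⧸ AddSubgroup.zmultiples γ)) x - w) / pairZ γ x).re)
      from Complex.norm_exp _]
    congr 1
    rw [mul_div_assoc, sub_div]
    simp only [Complex.mul_re, Complex.neg_re, Complex.neg_im, Complex.mul_im,
      Complex.ofReal_re, Complex.ofReal_im, Complex.I_re, Complex.I_im,
      Complex.sub_im, Complex.sub_re, Complex.re_ofNat, Complex.im_ofNat]
    ring
  -- comparison function
  set R : ℝ := Real.exp (-(2 * Real.pi * ε)) with hRdef
  have hR0 : 0 < R := Real.exp_pos _
  have hR1 : R < 1 := by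
    rw [hRdef, ← Real.exp_zero]
    apply Real.exp_lt_exp.mpr
    nlinarith [Real.pi_pos, hε]
  set C : ℝ := Real.exp (2 * Real.pi * (-ε - Wc)) with hCdef
  have hC0 : 0 < C := Real.exp_pos _
  have hle : ∀ q : S, ‖E q‖ ≤ C * R ^ (m q - 1).toNat * R ^ (-n q).toNat := by
    intro q
    rw [hEnorm q]
    have hi : (((m q - 1).toNat : ℕ) : ℝ) = ((m q : ℤ) : ℝ) - 1 := by
      have := Int.toNat_of_nonneg (by linarith [(hrep q).1] : (0:ℤ) ≤ m q - 1)
      exact_mod_cast congrArg (fun t : ℤ => (t : ℝ)) this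
    have hj : (((-n q).toNat : ℕ) : ℝ) = -((n q : ℤ) : ℝ) := by
      have := Int.toNat_of_nonneg (by linarith [(hrep q).2] : (0:ℤ) ≤ -n q)
      exact_mod_cast congrArg (fun t : ℤ => (t : ℝ)) this
    have hrhs : C * R ^ (m q - 1).toNat * R ^ (-n q).toNat
        = Real.exp (2 * Real.pi * (-ε * ((m q : ℝ) - (n q : ℝ)) - Wc)) := by
      rw [hCdef, hRdef, ← Real.exp_nat_mul, ← Real.exp_nat_mul, ← Real.exp_add,
        ← Real.exp_add, hi, hj]
      congr 1
      ring
    rw [hrhs]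
    apply Real.exp_le_exp.mpr
    have := hbound q
    nlinarith [Real.pi_pos, this]
  -- summability of the norms
  have hG : Summable (fun p : ℕ × ℕ => (C * R ^ p.1) * R ^ p.2) :=
    aux_summable C R hC0.le hR0.le hR1
  have hGcomp : Summable ((fun p : ℕ × ℕ => (C * R ^ p.1) * R ^ p.2)
      ∘ (fun q : S => ((m q - 1).toNat, (-n q).toNat))) :=
    hG.comp_injective hinj
  have hsum : Summable (fun q : S => ‖E q‖) := by
    apply Summable.of_nonneg_of_le (fun q => norm_nonneg _) _ hGcomp
    intro q
    have := hle q
    simpa [Function.comp, mul_assoc] using this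
  -- summability of the logarithms
  have hev : ∀ᶠ q in Filter.cofinite, ‖Complex.log (1 - E q)‖ ≤ 3/2 * ‖E q‖ := by
    have htend : Filter.Tendsto (fun q : S => ‖E q‖) Filter.cofinite (nhds 0) :=
      hsum.tendsto_cofinite_zero
    filter_upwards [htend.eventually_lt_const (by norm_num : (0:ℝ) < 1/2)] with q hq
    have h12 : ‖-E q‖ ≤ 1/2 := by
      rw [norm_neg]; linarith
    have := Complex.norm_log_one_add_half_le_self h12
    rw [norm_neg] at this
    rw [show (1 : ℂ) - E q = 1 + (-E q) by ring]
    exact this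
  have hlog : Summable (fun q : S => Complex.log (1 - E q)) :=
    Summable.of_norm_bounded_eventually (hsum.mul_left (3/2)) hev
  -- conclusion via the exponential representation
  have hfn : ∀ (_ : Unit) (q : S), (1 : ℂ) - E q ≠ 0 := by
    intro _ q
    have := gammaFacP_ne_zero hγx hw (Quotient.out (q : V ⧸ AddSubgroup.zmultiples γ))
    rw [gammaFacP, hEdef] at *
    exact this
  have hexp : Complex.exp (∑' q : S, Complex.log (1 - E q)) = ∏' q : S, (1 - E q) :=
    Complex.cexp_tsum_eq_tprod (hfn ()) hlog
  have hgoal : (∏' q : S, gammaFacP γ x w (Quotient.out (q : V ⧸ AddSubgroup.zmultiples γ)))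
      = ∏' q : S, (1 - E q) := by
    apply tprod_congr
    intro q
    rw [gammaFacP, hEdef]
  rw [hgoal, ← hexp]
  exact Complex.exp_ne_zero _

end Lemmas6
section Final

lemma pairZ_neg (γ : V) (x : Fin 3 → ℂ) : pairZ (-γ) x = -pairZ γ x := by
  simp only [pairZ, Pi.neg_apply]
  push_cast
  ring

lemma gammaFacP_neg (γ : V) (x : Fin 3 → ℂ) (w : ℂ) :
    gammaFacP (-γ) x w = gammaFacM γ x w := by
  funext δ
  unfold gammaFacP gammaFacM
  rw [pairZ_neg, neg_mul, neg_div_neg_eq]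

lemma gammaFacM_neg (γ : V) (x : Fin 3 → ℂ) (w : ℂ) :
    gammaFacM (-γ) x w = gammaFacP γ x w := by
  funext δ
  unfold gammaFacP gammaFacM
  rw [pairZ_neg, div_neg, ← neg_div, ← neg_mul]

lemma Cpm_swap (a b : V) : Cpm b a = Cmp a b := by
  ext δ
  exact and_comm

lemma Primitive.neg {γ : V} (h : Primitive γ) : Primitive (-γ) :=
  ⟨fun hh => h.1 (neg_eq_zero.mp hh), by rw [gcd3_neg]; exact h.2⟩

end Final

lemma Cmp_swap (a b : V) : Cmp b a = Cpm a b := by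
  ext δ
  exact and_comm
/-- the inversion relation `Γ_{a,b}(w,x)·Γ_{b,a}(w,x) = 1`. -/
theorem statement5 (a b γab γba : V) (ha : Primitive a) (hb : Primitive b)
    (hab : LinearIndependent ℚ ![toQ a, toQ b])
    (hγab : IsDirVec a b γab) (hγba : IsDirVec b a γba)
    (x : Fin 3 → ℂ) (hx : x ∈ UPlus a ∩ UPlus b)
    (w : ℂ) (hw : ∀ δ : V, w ≠ pairZ δ x) :
    GammaWedge a b γab w x * GammaWedge b a γba w x = 1 := by
  have hne : a ≠ b := li_ne hab
  obtain ⟨hpab, s, hs, hcrab⟩ := hγab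
  obtain ⟨hpba, t, ht, hcrba⟩ := hγba
  have hγ : γba = -γab := by
    have h1 : t • γba = s • (-γab) := by
      calc t • γba = cross b a := hcrba.symm
      _ = -(s • γab) := by rw [cross_swap, hcrab]
      _ = s • (-γab) := by rw [smul_neg]
    exact prim_smul_eq hpba hpab.neg ht hs h1
  subst hγ
  have hN : (∏' q : (QuotientAddGroup.mk '' Cpm a b : Set (V ⧸ AddSubgroup.zmultiples γab)),
      gammaFacP γab x w (Quotient.out (q : V ⧸ AddSubgroup.zmultiples γab))) ≠ 0 :=
    tprod_ne_zero a b γab hab ⟨hpab, s, hs, hcrab⟩ x hx w hw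
  have hD := tprod_ne_zero b a (-γab) (li_swap hab) ⟨hpab.neg, t, ht, hcrba⟩ x ⟨hx.2, hx.1⟩ w hw
  rw [AddSubgroup.zmultiples_neg, Cpm_swap a b, gammaFacP_neg] at hD
  unfold GammaWedge
  rw [if_neg hne, if_neg (fun h => hne h.symm)]
  rw [AddSubgroup.zmultiples_neg, Cpm_swap a b, Cmp_swap a b, gammaFacP_neg, gammaFacM_neg]
  rw [div_mul_div_comm, mul_comm]
  exact div_self (mul_ne_zero hD hN)

end EGG
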